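/- arXiv:1608.02695 — 2 statements merged into one kernel-verified Lean document; each statement's English description precedes it below -/
import Mathlib

section
/- Let q > 0 and Q ∈ [0,1). If a POVM (M_0,M_1,…,M_N) satisfies tr(ρ_0 M_0) = Q and attains P̄_cor = P̄_cor^opt(q), then P_cor^opt(Q) = P̄_cor^opt(q) − qQ, and this same POVM attains P_cor^opt(Q). -/
open Matrix ComplexOrder

noncomputable section

namespace FRIR

variable {d N : ℕ}

/-- A POVM with `N+1` outcomes on a `d`-dimensional system: `M 0` is the
inconclusive outcome, `M i.succ` is the conclusive outcome for state `i`. -/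
def IsPOVM (M : Fin (N + 1) → Matrix (Fin d) (Fin d) ℂ) : Prop :=
  (∀ i, (M i).PosSemidef) ∧ ∑ i, M i = 1

/-- `ρ₀ = ∑ i q_i ρ_i`. -/
def rho0 (q : Fin N → ℝ) (ρ : Fin N → Matrix (Fin d) (Fin d) ℂ) :
    Matrix (Fin d) (Fin d) ℂ :=
  ∑ i, (q i : ℂ) • ρ i

/-- The probability of the inconclusive result, `P_I = tr(ρ₀ M₀)`. -/
def PIof (q : Fin N → ℝ) (ρ : Fin N → Matrix (Fin d) (Fin d) ℂ)
    (M : Fin (N + 1) → Matrix (Fin d) (Fin d) ℂ) : ℝ :=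
  (Matrix.trace (rho0 q ρ * M 0)).re

/-- `P_cor = ∑ i q_i tr(ρ_i M_i)`. -/
def Pcor (q : Fin N → ℝ) (ρ : Fin N → Matrix (Fin d) (Fin d) ℂ)
    (M : Fin (N + 1) → Matrix (Fin d) (Fin d) ℂ) : ℝ :=
  ∑ i : Fin N, q i * (Matrix.trace (ρ i * M i.succ)).re

/-- `P̄_cor = q·tr(ρ₀M₀) + ∑ i q_i tr(ρ_i M_i)`. -/
def PbarCor (qv : ℝ) (q : Fin N → ℝ) (ρ : Fin N → Matrix (Fin d) (Fin d) ℂ)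
    (M : Fin (N + 1) → Matrix (Fin d) (Fin d) ℂ) : ℝ :=
  qv * PIof q ρ M + Pcor q ρ M

/-- `P̄_cor^opt(q)`: the maximal value of `P̄_cor` over all POVMs. -/
def PbarOpt (qv : ℝ) (q : Fin N → ℝ) (ρ : Fin N → Matrix (Fin d) (Fin d) ℂ) : ℝ :=
  sSup {x : ℝ | ∃ M, IsPOVM M ∧ PbarCor qv q ρ M = x}

/-- `P_cor^opt(Q)`: the maximal value of `P_cor` over POVMs with `P_I = Q`. -/
def PcorOpt (Q : ℝ) (q : Fin N → ℝ) (ρ : Fin N → Matrix (Fin d) (Fin d) ℂ) : ℝ :=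
  sSup {x : ℝ | ∃ M, IsPOVM M ∧ PIof q ρ M = Q ∧ Pcor q ρ M = x}

/-- `P_I(q) = { tr(ρ₀M₀) : POVMs attaining P̄_cor^opt(q) }`. -/
def PIset (qv : ℝ) (q : Fin N → ℝ) (ρ : Fin N → Matrix (Fin d) (Fin d) ℂ) : Set ℝ :=
  {Q : ℝ | ∃ M, IsPOVM M ∧ PbarCor qv q ρ M = PbarOpt qv q ρ ∧ PIof q ρ M = Q}

lemma trace_re_nonneg {d : ℕ} {P : Matrix (Fin d) (Fin d) ℂ} (hP : P.PosSemidef) :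
    0 ≤ P.trace.re := by
  have h : ∀ i, 0 ≤ (P i i).re := by
    intro i
    have := hP.re_dotProduct_nonneg (Pi.single i 1)
    simpa [dotProduct, Pi.single_apply, apply_ite] using this
  rw [Matrix.trace, Complex.re_sum]
  exact Finset.sum_nonneg fun i _ => h i

lemma trace_mul_re_nonneg {d : ℕ} {A B : Matrix (Fin d) (Fin d) ℂ}
    (hA : A.PosSemidef) (hB : B.PosSemidef) : 0 ≤ (A * B).trace.re := by
  obtain ⟨S, hSh, hS⟩ : ∃ S : Matrix (Fin d) (Fin d) ℂ, S.IsHermitian ∧ S * S = A :=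
    by
      classical
      open scoped MatrixOrder in
      obtain ⟨X, hX, -, hXA⟩ := CFC.exists_sqrt_of_isSelfAdjoint_of_quasispectrumRestricts
        hA.isHermitian (QuasispectrumRestricts.nnreal_of_nonneg hA.nonneg)
      exact ⟨X, hX, hXA⟩
  have h1 : A * B = S * (S * B) := by rw [← mul_assoc, hS]
  rw [h1, Matrix.trace_mul_comm]
  have h2 : (S * B * S).PosSemidef := by
    have := hB.conjTranspose_mul_mul_same S
    rwa [hSh.eq] at this
  exact trace_re_nonneg h2

lemma trace_mul_re_le {d : ℕ} {A B : Matrix (Fin d) (Fin d) ℂ}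
    (hA : A.PosSemidef) (hB' : (1 - B).PosSemidef) :
    (A * B).trace.re ≤ A.trace.re := by
  have h := trace_mul_re_nonneg hA hB'
  have heq : A * (1 - B) = A - A * B := by rw [mul_sub, mul_one]
  rw [heq, Matrix.trace_sub, Complex.sub_re] at h
  linarith

/-- In a POVM, each effect is below the identity. -/
lemma povm_le_one {d N : ℕ} {M : Fin (N + 1) → Matrix (Fin d) (Fin d) ℂ}
    (hM : IsPOVM M) (i : Fin (N + 1)) : (1 - M i).PosSemidef := by
  have h : 1 - M i = ∑ j ∈ Finset.univ.erase i, M j := by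
    rw [sub_eq_iff_eq_add, ← hM.2]
    exact (Finset.sum_erase_add _ _ (Finset.mem_univ i)).symm
  rw [h]
  exact Finset.sum_induction M (fun A => A.PosSemidef)
    (fun a b ha hb => ha.add hb) Matrix.PosSemidef.zero (fun j _ => hM.1 j)

/-- If a POVM has `P_I = Q` and attains `P̄_cor^opt(q)`, then
`P_cor^opt(Q) = P̄_cor^opt(q) − qQ`, and the same POVM attains `P_cor^opt(Q)`. -/
theorem stmt0 {d N : ℕ} (hd : 0 < d) (hN : 0 < N)
    (q : Fin N → ℝ) (ρ : Fin N → Matrix (Fin d) (Fin d) ℂ)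
    (hq : ∀ i, 0 < q i) (hqsum : ∑ i, q i = 1)
    (hρ : ∀ i, (ρ i).PosSemidef) (htr : ∀ i, (ρ i).trace = 1)
    (hρ0 : (rho0 q ρ).PosDef)
    (qv Q : ℝ) (hqv : 0 < qv) (hQ : Q ∈ Set.Ico (0 : ℝ) 1)
    (M : Fin (N + 1) → Matrix (Fin d) (Fin d) ℂ)
    (hM : IsPOVM M)
    (hPI : PIof q ρ M = Q)
    (hopt : PbarCor qv q ρ M = PbarOpt qv q ρ) :
    PcorOpt Q q ρ = PbarOpt qv q ρ - qv * Q ∧ Pcor q ρ M = PcorOpt Q q ρ := by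
  obtain ⟨hQ0, hQ1⟩ := hQ
  -- trace of ρ₀ is 1
  have htr0re : (rho0 q ρ).trace.re = 1 := by
    have : (rho0 q ρ).trace = 1 := by
      simp only [rho0, Matrix.trace_sum, Matrix.trace_smul, htr, smul_eq_mul, mul_one]
      rw [← Complex.ofReal_sum, hqsum, Complex.ofReal_one]
    rw [this]; simp
  -- bound on PbarCor for any POVM
  have hPIle : ∀ M' : Fin (N + 1) → Matrix (Fin d) (Fin d) ℂ, IsPOVM M' →
      PIof q ρ M' ≤ 1 := by
    intro M' hM'
    have := trace_mul_re_le hρ0.posSemidef (povm_le_one hM' 0)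
    rwa [htr0re] at this
  have hPcorle : ∀ M' : Fin (N + 1) → Matrix (Fin d) (Fin d) ℂ, IsPOVM M' →
      Pcor q ρ M' ≤ 1 := by
    intro M' hM'
    calc Pcor q ρ M' ≤ ∑ i : Fin N, q i * 1 := by
          refine Finset.sum_le_sum fun i _ => ?_
          refine mul_le_mul_of_nonneg_left ?_ (hq i).le
          have := trace_mul_re_le (hρ i) (povm_le_one hM' i.succ)
          have htri : (ρ i).trace.re = 1 := by rw [htr i]; simp
          rwa [htri] at this
      _ = 1 := by simp [hqsum]
  have hPbarle : ∀ M' : Fin (N + 1) → Matrix (Fin d) (Fin d) ℂ, IsPOVM M' →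
      PbarCor qv q ρ M' ≤ qv + 1 := by
    intro M' hM'
    have h1 := hPIle M' hM'
    have h2 := hPcorle M' hM'
    have : qv * PIof q ρ M' ≤ qv * 1 := mul_le_mul_of_nonneg_left h1 hqv.le
    unfold PbarCor
    linarith
  -- PbarOpt is an upper bound for PbarCor of any POVM
  have hbdd : BddAbove {x : ℝ | ∃ M', IsPOVM M' ∧ PbarCor qv q ρ M' = x} := by
    refine ⟨qv + 1, fun x hx => ?_⟩
    obtain ⟨M', hM', rfl⟩ := hx
    exact hPbarle M' hM'
  have hle : ∀ M' : Fin (N + 1) → Matrix (Fin d) (Fin d) ℂ, IsPOVM M' →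
      PbarCor qv q ρ M' ≤ PbarOpt qv q ρ := by
    intro M' hM'
    exact le_csSup hbdd ⟨M', hM', rfl⟩
  -- key identity for M
  have hkey : Pcor q ρ M = PbarOpt qv q ρ - qv * Q := by
    have : qv * PIof q ρ M + Pcor q ρ M = PbarOpt qv q ρ := hopt
    rw [hPI] at this
    linarith
  -- the constrained set
  set S : Set ℝ := {x : ℝ | ∃ M', IsPOVM M' ∧ PIof q ρ M' = Q ∧ Pcor q ρ M' = x} with hS
  have hmem : Pcor q ρ M ∈ S := ⟨M, hM, hPI, rfl⟩
  have hub : ∀ x ∈ S, x ≤ PbarOpt qv q ρ - qv * Q := by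
    rintro x ⟨M', hM', hPI', rfl⟩
    have h1 : qv * PIof q ρ M' + Pcor q ρ M' ≤ PbarOpt qv q ρ := hle M' hM'
    rw [hPI'] at h1
    linarith
  have h1 : PcorOpt Q q ρ = PbarOpt qv q ρ - qv * Q := by
    refine le_antisymm (csSup_le ⟨_, hmem⟩ hub) ?_
    rw [← hkey]
    exact le_csSup ⟨_, hub⟩ hmem
  exact ⟨h1, by rw [h1, hkey]⟩

end FRIR
end
end

section
/- If 0 < q < 1/N, then every POVM (M_0,M_1,…,M_N) attaining P̄_cor = P̄_cor^opt(q) has M_0 = 0; consequently P_I(q) = {0}. -/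
open Matrix ComplexOrder

noncomputable section

namespace FRIR

variable {d N : ℕ}

/-! ### Auxiliary lemmas -/

lemma psd_diag_nonneg {n : Type*} [Fintype n] [DecidableEq n] {A : Matrix n n ℂ}
    (hA : A.PosSemidef) (j : n) : 0 ≤ A j j := by
  simpa [dotProduct, Pi.single_apply] using hA.dotProduct_mulVec_nonneg (Pi.single j 1)

lemma psd_trace_nonneg {n : Type*} [Fintype n] [DecidableEq n] {A : Matrix n n ℂ}
    (hA : A.PosSemidef) : 0 ≤ A.trace :=
  Finset.sum_nonneg fun j _ => psd_diag_nonneg hA j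

lemma trace_mul_psd_nonneg {n : Type*} [Fintype n] [DecidableEq n]
    {A B : Matrix n n ℂ} (hA : A.PosSemidef) (hB : B.PosSemidef) :
    0 ≤ (A * B).trace := by
  obtain ⟨C, rfl⟩ : ∃ C : Matrix n n ℂ, B = Cᴴ * C := by
    open scoped MatrixOrder in exact CStarAlgebra.nonneg_iff_eq_star_mul_self.mp hB.nonneg
  have h : (A * (Cᴴ * C)).trace = (C * A * Cᴴ).trace := by
    rw [← Matrix.mul_assoc, Matrix.trace_mul_comm, ← Matrix.mul_assoc]
  rw [h]
  exact psd_trace_nonneg (hA.mul_mul_conjTranspose_same C)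

lemma diag_conj {n : Type*} [Fintype n] {A C : Matrix n n ℂ} (j : n) :
    (C * A * Cᴴ) j j = dotProduct (star fun k => star (C j k)) (A *ᵥ fun k => star (C j k)) := by
  simp only [Matrix.mul_apply, dotProduct, Matrix.mulVec, Matrix.conjTranspose_apply,
    Pi.star_apply, star_star, dotProduct, Finset.sum_mul, Finset.mul_sum]
  rw [Finset.sum_comm]
  congr 1; ext k; congr 1; ext l; ring

lemma psd_zero_of_trace_zero {n : Type*} [Fintype n] [DecidableEq n]
    {A B : Matrix n n ℂ} (hA : A.PosDef) (hB : B.PosSemidef)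
    (h : (A * B).trace = 0) : B = 0 := by
  obtain ⟨C, rfl⟩ : ∃ C : Matrix n n ℂ, B = Cᴴ * C := by
    open scoped MatrixOrder in exact CStarAlgebra.nonneg_iff_eq_star_mul_self.mp hB.nonneg
  have htr : (C * A * Cᴴ).trace = 0 := by
    rw [← h, ← Matrix.mul_assoc, Matrix.trace_mul_comm, ← Matrix.mul_assoc,
      Matrix.trace_mul_comm, Matrix.mul_assoc]
  have hpsd : (C * A * Cᴴ).PosSemidef := hA.posSemidef.mul_mul_conjTranspose_same C
  have hdiag : ∀ j, (C * A * Cᴴ) j j = 0 := by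
    intro j
    have := (Finset.sum_eq_zero_iff_of_nonneg (fun j _ => psd_diag_nonneg hpsd j)).mp htr
    exact this j (Finset.mem_univ j)
  have hC : C = 0 := by
    ext j k
    by_contra hjk
    have hv : (fun k => star (C j k)) ≠ 0 := by
      intro hz
      apply hjk
      have := congrFun hz k
      simpa using this
    have := hA.dotProduct_mulVec_pos hv
    rw [← diag_conj j, hdiag j] at this
    exact lt_irrefl _ this
  rw [hC]; simp

lemma star_pi_single {n : Type*} [DecidableEq n] (j : n) (c : ℂ) :
    star (Pi.single j c) = Pi.single j (star c) (M := fun _ => ℂ) := by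
  ext l; by_cases h : l = j <;> simp [Pi.single_apply, h]

lemma quad_form {n : Type*} [Fintype n] [DecidableEq n] (A : Matrix n n ℂ)
    (j k : n) (c : ℂ) :
    dotProduct (star (Pi.single j 1 + Pi.single k c)) (A *ᵥ (Pi.single j 1 + Pi.single k c))
      = A j j + c * A j k + star c * A k j + star c * c * A k k := by
  simp only [star_add, Matrix.mulVec_add, dotProduct_add, add_dotProduct,
    Matrix.mulVec_single, star_pi_single, single_dotProduct, dotProduct_single]
  simp only [star_one, Pi.smul_apply, Matrix.col_apply, op_smul_eq_mul]
  ring_nf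

lemma entry_re_bound {n : Type*} [Fintype n] [DecidableEq n] {A : Matrix n n ℂ}
    (hA : A.PosSemidef) (hdiag : ∀ j, (A j j).re ≤ 1) (j k : n) (c : ℂ)
    (hc : star c * c = 1) : -1 ≤ (c * A j k).re := by
  have h0 := hA.dotProduct_mulVec_nonneg (Pi.single j 1 + Pi.single k c)
  rw [quad_form] at h0
  have herm : A k j = star (A j k) := (hA.1.apply k j).symm
  rw [herm, hc, one_mul] at h0
  have hre := (Complex.le_def.mp h0).1
  simp only [Complex.zero_re, Complex.add_re] at hre
  have h1 : (star c * star (A j k)).re = (c * A j k).re := by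
    rw [← star_mul']
    simp [Complex.star_def]
  rw [h1] at hre
  have := hdiag j
  have := hdiag k
  linarith

lemma entry_bound {n : Type*} [Fintype n] [DecidableEq n] {A : Matrix n n ℂ}
    (hA : A.PosSemidef) (hdiag : ∀ j, (A j j).re ≤ 1) (j k : n) :
    ‖A j k‖ ≤ 2 := by
  set z := A j k with hz
  have h1 : -1 ≤ z.re := by simpa using entry_re_bound hA hdiag j k 1 (by simp)
  have h2 : z.re ≤ 1 := by
    have := entry_re_bound hA hdiag j k (-1) (by simp)
    simp only [neg_mul, one_mul, Complex.neg_re] at this; linarith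
  have h3 : z.im ≤ 1 := by
    have := entry_re_bound hA hdiag j k Complex.I (by simp [Complex.star_def])
    simp only [Complex.mul_re, Complex.I_re, Complex.I_im] at this; linarith
  have h4 : -1 ≤ z.im := by
    have := entry_re_bound hA hdiag j k (-Complex.I) (by simp [Complex.star_def])
    simp only [neg_mul, Complex.neg_re, Complex.mul_re, Complex.I_re, Complex.I_im] at this
    linarith
  calc ‖z‖ ≤ |z.re| + |z.im| := Complex.norm_le_abs_re_add_abs_im z
    _ ≤ 1 + 1 := by
        gcongr <;> rw [abs_le] <;> constructor <;> linarith
    _ = 2 := by norm_num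

lemma smul_psd {n : Type*} [Fintype n] {r : ℝ} (hr : 0 ≤ r) {A : Matrix n n ℂ}
    (hA : A.PosSemidef) : ((r : ℂ) • A).PosSemidef := by
  refine Matrix.PosSemidef.of_dotProduct_mulVec_nonneg ?_ ?_
  · rw [Matrix.IsHermitian, Matrix.conjTranspose_smul, hA.1.eq]
    congr 1
    simp [Complex.star_def]
  · intro x
    rw [Matrix.smul_mulVec, dotProduct_smul, smul_eq_mul]
    exact mul_nonneg (Complex.zero_le_real.mpr hr) (hA.dotProduct_mulVec_nonneg x)

/-- The set of POVMs is compact. -/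
lemma povm_isCompact :
    IsCompact {M : Fin (N + 1) → Matrix (Fin d) (Fin d) ℂ | IsPOVM M} := by
  have hbox : IsCompact {M : Fin (N + 1) → Matrix (Fin d) (Fin d) ℂ |
      ∀ i j k, ‖M i j k‖ ≤ 2} := by
    have h : {M : Fin (N + 1) → Matrix (Fin d) (Fin d) ℂ | ∀ i j k, ‖M i j k‖ ≤ 2}
        = Set.univ.pi (fun _ : Fin (N + 1) =>
            Set.univ.pi (fun _ : Fin d => Set.univ.pi fun _ : Fin d =>
              Metric.closedBall (0 : ℂ) 2)) := by
      ext M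
      constructor
      · intro hM i _ j _
        intro k _
        simpa [Metric.mem_closedBall, Complex.dist_eq] using hM i j k
      · intro hM i j k
        have := hM i (Set.mem_univ i) j (Set.mem_univ j) k (Set.mem_univ k)
        simpa [Metric.mem_closedBall, Complex.dist_eq] using this
    rw [h]
    exact isCompact_univ_pi fun _ => isCompact_univ_pi fun _ =>
      isCompact_univ_pi fun _ => isCompact_closedBall _ _
  have hclosed : IsClosed {M : Fin (N + 1) → Matrix (Fin d) (Fin d) ℂ | IsPOVM M} := by
    have h : {M : Fin (N + 1) → Matrix (Fin d) (Fin d) ℂ | IsPOVM M}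
        = (⋂ i, ({M | (M i).IsHermitian} ∩
            ⋂ x : Fin d → ℂ, {M | 0 ≤ dotProduct (star x) ((M i) *ᵥ x)}))
          ∩ {M | ∑ i, M i = 1} := by
      ext M
      simp only [Set.mem_inter_iff, Set.mem_iInter, Set.mem_setOf_eq, IsPOVM,
        Matrix.posSemidef_iff_dotProduct_mulVec, forall_and]
    rw [h]
    refine IsClosed.inter (isClosed_iInter fun i => IsClosed.inter ?_ ?_) ?_
    · exact isClosed_eq ((continuous_apply i).matrix_conjTranspose) (continuous_apply i)
    · refine isClosed_iInter fun x => ?_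
      have hcont : Continuous fun M : Fin (N + 1) → Matrix (Fin d) (Fin d) ℂ =>
          dotProduct (star x) ((M i) *ᵥ x) :=
        Continuous.dotProduct continuous_const
          ((continuous_apply i).matrix_mulVec continuous_const)
      have hset : {M : Fin (N + 1) → Matrix (Fin d) (Fin d) ℂ |
          0 ≤ dotProduct (star x) ((M i) *ᵥ x)}
          = (fun M : Fin (N + 1) → Matrix (Fin d) (Fin d) ℂ =>
              dotProduct (star x) ((M i) *ᵥ x)) ⁻¹' {z : ℂ | 0 ≤ z} := rfl
      rw [hset]
      refine IsClosed.preimage hcont ?_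
      have : {z : ℂ | 0 ≤ z}
          = Complex.re ⁻¹' Set.Ici 0 ∩ Complex.im ⁻¹' {0} := by
        ext z
        simp [Complex.le_def, eq_comm]
      rw [this]
      exact (isClosed_Ici.preimage Complex.continuous_re).inter
        (isClosed_singleton.preimage Complex.continuous_im)
    · exact isClosed_eq (continuous_finset_sum _ fun i _ => continuous_apply i) continuous_const
  refine hbox.of_isClosed_subset hclosed ?_
  intro M hM i j k
  refine entry_bound (hM.1 i) (fun l => ?_) j k
  have hsum : ∑ i', (M i') l l = 1 := by
    have := congrFun (congrFun hM.2 l) l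
    simpa [Matrix.sum_apply, Matrix.one_apply_eq] using this
  have hle : (M i) l l ≤ 1 := by
    rw [← hsum]
    exact Finset.single_le_sum (f := fun i' => (M i') l l)
      (fun i' _ => psd_diag_nonneg (hM.1 i') l) (Finset.mem_univ i)
  have := (Complex.le_def.mp hle).1
  simpa using this

lemma continuous_pbarcor (qv : ℝ) (q : Fin N → ℝ) (ρ : Fin N → Matrix (Fin d) (Fin d) ℂ) :
    Continuous (PbarCor qv q ρ) := by
  unfold PbarCor PIof Pcor
  refine Continuous.add ?_ ?_
  · exact continuous_const.mul (Complex.continuous_re.comp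
      ((continuous_const.matrix_mul (continuous_apply 0)).matrix_trace))
  · exact continuous_finset_sum _ fun i _ => continuous_const.mul
      (Complex.continuous_re.comp
        ((continuous_const.matrix_mul (continuous_apply i.succ)).matrix_trace))

lemma povm_nonempty (d N : ℕ) :
    IsPOVM (fun i : Fin (N + 1) => if i = 0 then (1 : Matrix (Fin d) (Fin d) ℂ) else 0) := by
  constructor
  · intro i
    by_cases h : i = 0 <;> simp [h, Matrix.PosSemidef.one, Matrix.PosSemidef.zero]
  · simp

/-- `trace (ρ₀ * B) = ∑ i, q_i * trace (ρ_i * B)`. -/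
lemma trace_rho0_mul (q : Fin N → ℝ) (ρ : Fin N → Matrix (Fin d) (Fin d) ℂ)
    (B : Matrix (Fin d) (Fin d) ℂ) :
    Matrix.trace (rho0 q ρ * B) = ∑ i, (q i : ℂ) * Matrix.trace (ρ i * B) := by
  unfold rho0
  rw [Finset.sum_mul, Matrix.trace_sum]
  congr 1; ext i
  rw [Matrix.smul_mul, Matrix.trace_smul, smul_eq_mul]

lemma piof_eq_sum (q : Fin N → ℝ) (ρ : Fin N → Matrix (Fin d) (Fin d) ℂ)
    (M : Fin (N + 1) → Matrix (Fin d) (Fin d) ℂ) :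
    PIof q ρ M = ∑ i, q i * (Matrix.trace (ρ i * M 0)).re := by
  unfold PIof
  rw [trace_rho0_mul, Complex.re_sum]
  congr 1; ext i
  exact Complex.re_ofReal_mul _ _

/-- The redistribution map: kill `M 0`, add `(1/N) M 0` to every conclusive outcome. -/
def redis (M : Fin (N + 1) → Matrix (Fin d) (Fin d) ℂ) :
    Fin (N + 1) → Matrix (Fin d) (Fin d) ℂ :=
  Fin.cons 0 fun i : Fin N => M i.succ + ((((N : ℝ)⁻¹ : ℝ)) : ℂ) • M 0

lemma redis_isPOVM (hN : 0 < N) {M : Fin (N + 1) → Matrix (Fin d) (Fin d) ℂ}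
    (hM : IsPOVM M) : IsPOVM (redis M) := by
  have hNC : ((N : ℂ)) ≠ 0 := Nat.cast_ne_zero.mpr hN.ne'
  constructor
  · intro i
    refine Fin.cases ?_ (fun i => ?_) i
    · rw [redis, Fin.cons_zero]; exact Matrix.PosSemidef.zero
    · rw [redis, Fin.cons_succ]
      exact (hM.1 i.succ).add (smul_psd (by positivity) (hM.1 0))
  · have h2 := hM.2
    rw [Fin.sum_univ_succ] at h2
    rw [Fin.sum_univ_succ]
    simp only [redis, Fin.cons_zero, Fin.cons_succ]
    rw [Finset.sum_add_distrib, Finset.sum_const, Finset.card_univ, Fintype.card_fin]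
    have hsm : N • ((((N : ℝ)⁻¹ : ℝ)) : ℂ) • M 0 = M 0 := by
      rw [← Nat.cast_smul_eq_nsmul ℂ, smul_smul]
      push_cast
      rw [mul_inv_cancel₀ hNC, one_smul]
    rw [hsm, zero_add, add_comm]
    exact h2

lemma redis_piof (q : Fin N → ℝ) (ρ : Fin N → Matrix (Fin d) (Fin d) ℂ)
    (M : Fin (N + 1) → Matrix (Fin d) (Fin d) ℂ) :
    PIof q ρ (redis M) = 0 := by
  unfold PIof redis
  rw [Fin.cons_zero]
  simp

lemma redis_pbarcor (hN : 0 < N) (qv : ℝ) (q : Fin N → ℝ)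
    (ρ : Fin N → Matrix (Fin d) (Fin d) ℂ)
    (M : Fin (N + 1) → Matrix (Fin d) (Fin d) ℂ) :
    PbarCor qv q ρ (redis M) = PbarCor qv q ρ M + ((N : ℝ)⁻¹ - qv) * PIof q ρ M := by
  have hpc : Pcor q ρ (redis M) = Pcor q ρ M + (N : ℝ)⁻¹ * PIof q ρ M := by
    unfold Pcor
    rw [piof_eq_sum, Finset.mul_sum, ← Finset.sum_add_distrib]
    congr 1; ext i
    simp only [redis, Fin.cons_succ]
    rw [Matrix.mul_add, Matrix.trace_add, Matrix.mul_smul, Matrix.trace_smul, Complex.add_re,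
      smul_eq_mul, Complex.re_ofReal_mul]
    ring
  unfold PbarCor
  rw [hpc, redis_piof]
  ring

lemma piof_nonneg (q : Fin N → ℝ) (ρ : Fin N → Matrix (Fin d) (Fin d) ℂ)
    (hρ0 : (rho0 q ρ).PosDef) {M : Fin (N + 1) → Matrix (Fin d) (Fin d) ℂ}
    (hM : IsPOVM M) : 0 ≤ PIof q ρ M := by
  have := trace_mul_psd_nonneg hρ0.posSemidef (hM.1 0)
  exact (Complex.le_def.mp this).1

/-- If `0 < q < 1/N`, then every POVM attaining `P̄_cor^opt(q)`
has `M₀ = 0`; consequently `P_I(q) = {0}`. -/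
theorem stmt3 {d N : ℕ} (hd : 0 < d) (hN : 0 < N)
    (q : Fin N → ℝ) (ρ : Fin N → Matrix (Fin d) (Fin d) ℂ)
    (hq : ∀ i, 0 < q i) (hqsum : ∑ i, q i = 1)
    (hρ : ∀ i, (ρ i).PosSemidef) (htr : ∀ i, (ρ i).trace = 1)
    (hρ0 : (rho0 q ρ).PosDef)
    (qv : ℝ) (hqv : 0 < qv) (hlt : qv < 1 / (N : ℝ)) :
    (∀ M : Fin (N + 1) → Matrix (Fin d) (Fin d) ℂ,
        IsPOVM M → PbarCor qv q ρ M = PbarOpt qv q ρ → M 0 = 0) ∧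
      PIset qv q ρ = {0} := by
  have hSimg : {x : ℝ | ∃ M, IsPOVM M ∧ PbarCor qv q ρ M = x}
      = PbarCor qv q ρ '' {M | IsPOVM M} := by
    ext x
    simp [Set.mem_image, Set.mem_setOf_eq]
  have hScompact : IsCompact {x : ℝ | ∃ M, IsPOVM M ∧ PbarCor qv q ρ M = x} := by
    rw [hSimg]
    exact povm_isCompact.image (continuous_pbarcor qv q ρ)
  have hSne : {x : ℝ | ∃ M, IsPOVM M ∧ PbarCor qv q ρ M = x}.Nonempty :=
    ⟨_, ⟨_, povm_nonempty d N, rfl⟩⟩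
  have hbdd : BddAbove {x : ℝ | ∃ M, IsPOVM M ∧ PbarCor qv q ρ M = x} := hScompact.bddAbove
  have hpos : 0 < (N : ℝ)⁻¹ - qv := by
    rw [one_div] at hlt; linarith
  -- Part 1
  have part1 : ∀ M : Fin (N + 1) → Matrix (Fin d) (Fin d) ℂ,
      IsPOVM M → PbarCor qv q ρ M = PbarOpt qv q ρ → M 0 = 0 := by
    intro M hM hopt
    have hT : IsPOVM (redis M) := redis_isPOVM hN hM
    have hmem : PbarCor qv q ρ (redis M) ∈
        {x : ℝ | ∃ M, IsPOVM M ∧ PbarCor qv q ρ M = x} := ⟨redis M, hT, rfl⟩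
    have hle : PbarCor qv q ρ (redis M) ≤ PbarOpt qv q ρ := le_csSup hbdd hmem
    rw [redis_pbarcor hN, hopt] at hle
    have hPInn : 0 ≤ PIof q ρ M := piof_nonneg q ρ hρ0 hM
    have hPI : PIof q ρ M = 0 := by nlinarith
    have htrz : Matrix.trace (rho0 q ρ * M 0) = 0 := by
      have h0 : 0 ≤ Matrix.trace (rho0 q ρ * M 0) :=
        trace_mul_psd_nonneg hρ0.posSemidef (hM.1 0)
      have him := (Complex.nonneg_iff.mp h0).2
      apply Complex.ext
      · exact hPI
      · exact him.symm
    exact psd_zero_of_trace_zero hρ0 (hM.1 0) htrz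
  refine ⟨part1, ?_⟩
  -- Part 2
  ext Q
  simp only [PIset, Set.mem_setOf_eq, Set.mem_singleton_iff]
  constructor
  · rintro ⟨M, hM, hopt, rfl⟩
    have h0 : M 0 = 0 := part1 M hM hopt
    unfold PIof
    rw [h0]
    simp
  · rintro rfl
    have hsup := hScompact.sSup_mem hSne
    obtain ⟨M, hM, hPb⟩ := hsup
    refine ⟨M, hM, hPb, ?_⟩
    have h0 : M 0 = 0 := part1 M hM hPb
    unfold PIof
    rw [h0]
    simp

end FRIR
end
end
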